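/- arXiv:2111.00027 — 4 statements merged into one kernel-verified Lean document; each statement's English description precedes it below -/
import Mathlib

section
/- The (1-α)-quantile of a central chi-squared distribution with m degrees of freedom is at most m + 2√(m log(1/α)) + 2 log(1/α), for α ∈ (0,1). -/
open MeasureTheory ProbabilityTheory Real
open scoped ENNReal NNReal

namespace ChisqAux

lemma integrand_eq (s x : ℝ) :
    gaussianPDFReal 0 1 x * Real.exp (s * x ^ 2)
      = (Real.sqrt (2 * π))⁻¹ * Real.exp (-(1/2 - s) * x ^ 2) := by
  simp only [gaussianPDFReal, NNReal.coe_one, mul_one, sub_zero]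
  rw [mul_assoc, ← Real.exp_add]
  ring_nf

lemma integral_exp_sq {s : ℝ} (hs : s < 1/2) :
    ∫ x, Real.exp (s * x ^ 2) ∂(gaussianReal 0 1) = (Real.sqrt (1 - 2*s))⁻¹ := by
  have hb : 0 < 1/2 - s := by linarith
  rw [gaussianReal_of_var_ne_zero _ one_ne_zero]
  have hwd : gaussianPDF 0 1 = fun x => ((gaussianPDFReal 0 1 x).toNNReal : ℝ≥0∞) := rfl
  rw [hwd, integral_withDensity_eq_integral_smul
    (measurable_gaussianPDFReal 0 1).real_toNNReal]
  have h1 : ∀ x : ℝ, (gaussianPDFReal 0 1 x).toNNReal • Real.exp (s * x ^ 2)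
      = (Real.sqrt (2 * π))⁻¹ * Real.exp (-(1/2 - s) * x ^ 2) := by
    intro x
    rw [NNReal.smul_def, smul_eq_mul, Real.coe_toNNReal _ (gaussianPDFReal_nonneg 0 1 x)]
    exact integrand_eq s x
  simp_rw [h1]
  rw [integral_const_mul, integral_gaussian]
  rw [← Real.sqrt_inv, ← Real.sqrt_mul (by positivity), ← Real.sqrt_inv]
  congr 1
  have hne : (1:ℝ) - 2*s ≠ 0 := by linarith
  field_simp [Real.pi_ne_zero]

lemma integrable_exp_sq {s : ℝ} (hs : s < 1/2) :
    Integrable (fun x => Real.exp (s * x ^ 2)) (gaussianReal 0 1) := by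
  have hb : 0 < 1/2 - s := by linarith
  rw [gaussianReal_of_var_ne_zero _ one_ne_zero]
  have hwd : gaussianPDF 0 1 = fun x => ((gaussianPDFReal 0 1 x).toNNReal : ℝ≥0∞) := rfl
  rw [hwd, integrable_withDensity_iff_integrable_smul
    (measurable_gaussianPDFReal 0 1).real_toNNReal]
  have h1 : (fun x => (gaussianPDFReal 0 1 x).toNNReal • Real.exp (s * x ^ 2))
      = fun x => (Real.sqrt (2 * π))⁻¹ * Real.exp (-(1/2 - s) * x ^ 2) := by
    funext x
    rw [NNReal.smul_def, smul_eq_mul, Real.coe_toNNReal _ (gaussianPDFReal_nonneg 0 1 x)]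
    exact integrand_eq s x
  rw [h1]
  exact (integrable_exp_neg_mul_sq hb).const_mul _

lemma sqrt_inv_le_exp {s : ℝ} (h0 : 0 ≤ s) (h1 : s < 1/2) :
    (Real.sqrt (1 - 2*s))⁻¹ ≤ Real.exp (s + s^2 / (1 - 2*s)) := by
  have hv : 0 < 1 - 2*s := by linarith
  set x : ℝ := 2*s + 2*s^2/(1-2*s) with hxdef
  have hx0 : 0 ≤ x := by positivity
  have hkey : (1 - 2*s)⁻¹ ≤ 1 + x + x^2/2 := by
    rw [inv_eq_one_div, div_le_iff₀ hv]
    have hid : (1 + x + x^2/2) * (1-2*s) - 1 = 2*s^4/(1-2*s) := by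
      rw [hxdef]; field_simp; ring
    have hpos : 0 ≤ 2*s^4/(1-2*s) := by positivity
    linarith
  have h2 : (1 - 2*s)⁻¹ ≤ Real.exp x := hkey.trans (Real.quadratic_le_exp_of_nonneg hx0)
  have h3 : Real.exp x = (Real.exp (s + s^2/(1-2*s)))^2 := by
    rw [← Real.exp_nat_mul]
    congr 1
    push_cast
    ring
  calc (Real.sqrt (1 - 2*s))⁻¹ = Real.sqrt ((1 - 2*s)⁻¹) := (Real.sqrt_inv _).symm
    _ ≤ Real.sqrt ((Real.exp (s + s^2/(1-2*s)))^2) := Real.sqrt_le_sqrt (h3 ▸ h2)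
    _ = Real.exp (s + s^2/(1-2*s)) := Real.sqrt_sq (Real.exp_nonneg _)

end ChisqAux

/-- The `(1-α)`-quantile of a central chi-squared distribution with `m` degrees
of freedom (the smallest `q` with `P(X ≥ q) ≤ α`, for `X` a sum of squares of
`m` i.i.d. standard Gaussians) is at most `m + 2√(m log(1/α)) + 2 log(1/α)`. -/
theorem chisq_quantile_upper_bound
    {Ω : Type*} [MeasurableSpace Ω] (P : Measure Ω) [IsProbabilityMeasure P]
    (m : ℕ) (Y : Fin m → Ω → ℝ)
    (hindep : iIndepFun Y P)
    (hY : ∀ i, Measure.map (Y i) P = gaussianReal 0 1)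
    (α : ℝ) (hα : α ∈ Set.Ioo (0:ℝ) 1) :
    sInf {q : ℝ | (P {ω | q ≤ ∑ i, Y i ω ^ 2}).toReal ≤ α}
      ≤ m + 2 * Real.sqrt (m * Real.log (1 / α)) + 2 * Real.log (1 / α) := by
  obtain ⟨hα0, hα1⟩ := hα
  set t : ℝ := Real.log (1/α) with ht_def
  have ht : 0 < t := Real.log_pos (by rw [lt_div_iff₀ hα0]; linarith)
  set q : ℝ := m + 2 * Real.sqrt (m * t) + 2 * t with hq_def
  have hbdd : BddBelow {q' : ℝ | (P {ω | q' ≤ ∑ i, Y i ω ^ 2}).toReal ≤ α} := by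
    refine ⟨0, fun q' hq' => ?_⟩
    by_contra hneg
    push_neg at hneg
    have huniv : {ω | q' ≤ ∑ i, Y i ω ^ 2} = Set.univ := by
      ext ω
      simp only [Set.mem_setOf_eq, Set.mem_univ, iff_true]
      exact le_trans hneg.le (Finset.sum_nonneg fun i _ => sq_nonneg _)
    rw [Set.mem_setOf_eq, huniv, measure_univ, ENNReal.toReal_one] at hq'
    linarith
  have hmem : (P {ω | q ≤ ∑ i, Y i ω ^ 2}).toReal ≤ α := by
    rcases Nat.eq_zero_or_pos m with hm | hm
    · subst hm
      have hempty : {ω : Ω | q ≤ ∑ i : Fin 0, Y i ω ^ 2} = ∅ := by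
        ext ω
        simp only [Finset.univ_eq_empty, Finset.sum_empty, Set.mem_setOf_eq,
          Set.mem_empty_iff_false, iff_false, not_le, hq_def]
        have : Real.sqrt ((0:ℕ) * t) = 0 := by simp
        rw [this]
        push_cast
        linarith
      rw [hempty]
      simp [hα0.le]
    -- m ≥ 1
    have hYae : ∀ i, AEMeasurable (Y i) P := by
      intro i
      by_contra h
      have h0 := Measure.map_of_not_aemeasurable h
      rw [hY i] at h0
      exact (IsProbabilityMeasure.ne_zero (gaussianReal 0 1)) h0
    set Z : Fin m → Ω → ℝ := fun i => (hYae i).mk (Y i) with hZdef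
    have hZmeas : ∀ i, Measurable (Z i) := fun i => (hYae i).measurable_mk
    have hZae : ∀ i, Y i =ᵐ[P] Z i := fun i => (hYae i).ae_eq_mk
    have hZmap : ∀ i, Measure.map (Z i) P = gaussianReal 0 1 := fun i => by
      rw [← Measure.map_congr (hZae i)]; exact hY i
    have hindepZ : iIndepFun Z P := by
      rw [iIndepFun_iff_measure_inter_preimage_eq_mul] at hindep ⊢
      intro S sets hsets
      have hpre : ∀ i : Fin m, (Z i ⁻¹' sets i : Set Ω) =ᵐ[P] (Y i ⁻¹' sets i) := by
        intro i
        rw [Filter.eventuallyEq_set]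
        filter_upwards [hZae i] with ω hω
        rw [Set.mem_preimage, Set.mem_preimage, hω]
      have hinter : (⋂ i ∈ S, Z i ⁻¹' sets i : Set Ω) =ᵐ[P] (⋂ i ∈ S, Y i ⁻¹' sets i) := by
        rw [Filter.eventuallyEq_set]
        have hall : ∀ᵐ ω ∂P, ∀ i : Fin m, Y i ω = Z i ω :=
          (MeasureTheory.ae_all_iff).2 fun i => hZae i
        filter_upwards [hall] with ω hω
        simp only [Set.mem_iInter, Set.mem_preimage]
        constructor
        · intro h i hi; rw [hω i]; exact h i hi
        · intro h i hi; rw [← hω i]; exact h i hi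
      calc P (⋂ i ∈ S, Z i ⁻¹' sets i) = P (⋂ i ∈ S, Y i ⁻¹' sets i) := measure_congr hinter
        _ = ∏ i ∈ S, P (Y i ⁻¹' sets i) := hindep S hsets
        _ = ∏ i ∈ S, P (Z i ⁻¹' sets i) :=
            Finset.prod_congr rfl fun i _ => (measure_congr (hpre i)).symm
    -- event congruence
    have hevent : P {ω | q ≤ ∑ i, Y i ω ^ 2} = P {ω | q ≤ ∑ i, Z i ω ^ 2} := by
      refine measure_congr ?_
      rw [Filter.eventuallyEq_set]
      have hall : ∀ᵐ ω ∂P, ∀ i : Fin m, Y i ω = Z i ω :=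
        (MeasureTheory.ae_all_iff).2 fun i => hZae i
      filter_upwards [hall] with ω hω
      have : ∑ i, Y i ω ^ 2 = ∑ i, Z i ω ^ 2 :=
        Finset.sum_congr rfl fun i _ => by rw [hω i]
      rw [this]
    -- setup for Chernoff
    set a : ℝ := Real.sqrt m with ha_def
    set b : ℝ := Real.sqrt t with hb_def
    have hm0 : (0:ℝ) < m := by exact_mod_cast hm
    have ha : 0 < a := Real.sqrt_pos.2 hm0
    have hb : 0 < b := Real.sqrt_pos.2 ht
    have ha2 : a^2 = m := Real.sq_sqrt hm0.le
    have hb2 : b^2 = t := Real.sq_sqrt ht.le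
    have hD : 0 < a + 2*b := by linarith
    set s : ℝ := b / (a + 2*b) with hs_def
    have hs0 : 0 ≤ s := by positivity
    have hs : s < 1/2 := by
      rw [hs_def, div_lt_iff₀ hD]; linarith
    have h1s : 1 - 2*s = a / (a + 2*b) := by
      rw [hs_def]; field_simp; ring
    have hqab : q = a^2 + 2*(a*b) + 2*b^2 := by
      rw [hq_def, ha2, hb2, Real.sqrt_mul (Nat.cast_nonneg m) t]
    -- the summand functions
    set X : Fin m → Ω → ℝ := fun i ω => Z i ω ^ 2 with hXdef
    have hXmeas : ∀ i, Measurable (X i) := fun i => (hZmeas i).pow_const 2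
    have hindepX : iIndepFun X P := by
      have := hindepZ.comp (fun _ => fun y : ℝ => y ^ 2)
        (fun _ => measurable_id.pow_const 2)
      exact this
    have hf_cont : Continuous (fun x : ℝ => Real.exp (s * x ^ 2)) := by
      continuity
    have hintX : ∀ i, Integrable (fun ω => Real.exp (s * X i ω)) P := by
      intro i
      have h := ChisqAux.integrable_exp_sq hs
      rw [← hZmap i] at h
      exact (integrable_map_measure hf_cont.aestronglyMeasurable
        (hZmeas i).aemeasurable).1 h
    have hmgf : ∀ i, mgf (X i) P s = (Real.sqrt (1 - 2*s))⁻¹ := by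
      intro i
      have : mgf (X i) P s = ∫ x, Real.exp (s * x ^ 2) ∂(Measure.map (Z i) P) := by
        rw [integral_map (hZmeas i).aemeasurable hf_cont.aestronglyMeasurable]
        rfl
      rw [this, hZmap i, ChisqAux.integral_exp_sq hs]
    have hint_sum : Integrable (fun ω => Real.exp (s * (∑ i, X i) ω)) P :=
      iIndepFun.integrable_exp_mul_sum hindepX hXmeas (fun i _ => hintX i)
    have hsum_eq : {ω | q ≤ ∑ i, Z i ω ^ 2} = {ω | q ≤ (∑ i, X i) ω} := by
      ext ω
      simp [hXdef, Finset.sum_apply]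
    have hchernoff := measure_ge_le_exp_mul_mgf (X := ∑ i, X i) (μ := P) q hs0 hint_sum
    rw [hindepX.mgf_sum hXmeas Finset.univ] at hchernoff
    have hprod : ∏ i : Fin m, mgf (X i) P s = ((Real.sqrt (1 - 2*s))⁻¹)^m := by
      rw [Finset.prod_congr rfl fun i _ => hmgf i, Finset.prod_const, Finset.card_univ,
        Fintype.card_fin]
    rw [hprod] at hchernoff
    -- bound the rhs
    have hbound : Real.exp (-s * q) * ((Real.sqrt (1 - 2*s))⁻¹)^m ≤ α := by
      have h1 : ((Real.sqrt (1 - 2*s))⁻¹)^m ≤ (Real.exp (s + s^2/(1-2*s)))^m := by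
        apply pow_le_pow_left₀ (by positivity) (ChisqAux.sqrt_inv_le_exp hs0 hs)
      have h2 : Real.exp (-s * q) * ((Real.sqrt (1 - 2*s))⁻¹)^m
          ≤ Real.exp (-s * q) * (Real.exp (s + s^2/(1-2*s)))^m :=
        mul_le_mul_of_nonneg_left h1 (Real.exp_nonneg _)
      refine h2.trans ?_
      rw [← Real.exp_nat_mul, ← Real.exp_add]
      have hexp_eq : -s * q + m * (s + s^2/(1-2*s)) = -t := by
        rw [hqab, h1s, hs_def, ← ha2, ← hb2]
        field_simp
        ring
      rw [hexp_eq]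
      have : Real.exp (-t) = α := by
        rw [ht_def, one_div, Real.log_inv, neg_neg, Real.exp_log hα0]
      rw [this]
    calc (P {ω | q ≤ ∑ i, Y i ω ^ 2}).toReal
        = (P {ω | q ≤ (∑ i, X i) ω}).toReal := by rw [hevent, hsum_eq]
      _ ≤ Real.exp (-s * q) * ((Real.sqrt (1 - 2*s))⁻¹)^m := hchernoff
      _ ≤ α := hbound
  exact csInf_le hbdd hmem
end

section
/- Let A ≥ 1, L ≥ 1 integers, α, β ∈ (0,1), and suppose A ≥ √(3 log(1/β)) + (3 log(1/β) + 2√(log(1/α)) + 2 log(1/α))^{1/2}. Then A²√L - 2√((L-1+2A²√L) log(1/β)) ≥ 2√((L-1) log(1/α)) + 2 log(1/α). -/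
set_option maxHeartbeats 1000000


/-- The algebraic inequality used in the asymptotic power analysis. -/
theorem power_threshold_ineq (L : ℕ) (A α β : ℝ) (hL : 1 ≤ L) (hA : 1 ≤ A)
    (hα : α ∈ Set.Ioo (0:ℝ) 1) (hβ : β ∈ Set.Ioo (0:ℝ) 1)
    (hAbig : A ≥ Real.sqrt (3 * Real.log (1 / β)) +
      Real.sqrt (3 * Real.log (1 / β) + 2 * Real.sqrt (Real.log (1 / α))
        + 2 * Real.log (1 / α))) :
    A ^ 2 * Real.sqrt L -
      2 * Real.sqrt (((L : ℝ) - 1 + 2 * A ^ 2 * Real.sqrt L) * Real.log (1 / β))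
    ≥ 2 * Real.sqrt (((L : ℝ) - 1) * Real.log (1 / α)) + 2 * Real.log (1 / α) := by
  obtain ⟨hα0, hα1⟩ := hα
  obtain ⟨hβ0, hβ1⟩ := hβ
  set a := Real.log (1 / α) with ha
  set b := Real.log (1 / β) with hb
  have haa : 0 ≤ a := Real.log_nonneg (by rw [le_div_iff₀ hα0]; linarith)
  have hbb : 0 ≤ b := Real.log_nonneg (by rw [le_div_iff₀ hβ0]; linarith)
  set s := Real.sqrt (L : ℝ) with hs
  have hs1 : (1 : ℝ) ≤ s := by
    rw [hs, show (1:ℝ) = Real.sqrt 1 by simp]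
    exact Real.sqrt_le_sqrt (by exact_mod_cast hL)
  have hs2 : s ^ 2 = (L : ℝ) := Real.sq_sqrt (Nat.cast_nonneg L)
  set B := Real.sqrt (3 * b) with hBdef
  have hB0 : 0 ≤ B := Real.sqrt_nonneg _
  have hB2 : B ^ 2 = 3 * b := Real.sq_sqrt (by linarith)
  set c := 2 * Real.sqrt a + 2 * a with hc
  have hc0 : 0 ≤ c := by positivity
  have hL1 : (1 : ℝ) ≤ (L : ℝ) := by exact_mod_cast hL
  -- key: A^2 - 2*A*B ≥ c
  have hsq : Real.sqrt (3 * b + 2 * Real.sqrt a + 2 * a) = Real.sqrt (B ^ 2 + c) := by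
    rw [hB2, hc]; ring_nf
  have hAB : Real.sqrt (B ^ 2 + c) ≤ A - B := by
    rw [← hsq]; linarith [hAbig]
  have hkey : c ≤ A ^ 2 - 2 * A * B := by
    have h1 : B ^ 2 + c ≤ (A - B) ^ 2 := by
      have := Real.sq_sqrt (by positivity : (0:ℝ) ≤ B ^ 2 + c)
      nlinarith [Real.sqrt_nonneg (B ^ 2 + c)]
    nlinarith
  -- bound the beta sqrt term
  have h2 : Real.sqrt (((L : ℝ) - 1 + 2 * A ^ 2 * s) * b) ≤ A * B * s := by
    rw [show A * B * s = Real.sqrt ((A * B * s) ^ 2) from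
      (Real.sqrt_sq (by positivity)).symm]
    apply Real.sqrt_le_sqrt
    have hx : (A * B * s) ^ 2 = A ^ 2 * (3 * b) * s ^ 2 := by
      rw [mul_pow, mul_pow, hB2]
    rw [hx]
    have hA2 : 1 ≤ A ^ 2 := by nlinarith
    nlinarith [mul_nonneg (mul_nonneg (sq_nonneg A) hbb) (sub_nonneg.mpr hs1),
      mul_nonneg hbb (sub_nonneg.mpr hA2), sq_nonneg s]
  -- bound the alpha sqrt term
  have h3 : Real.sqrt (((L : ℝ) - 1) * a) ≤ s * Real.sqrt a := by
    rw [show s * Real.sqrt a = Real.sqrt (s ^ 2 * a) by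
      rw [Real.sqrt_mul (sq_nonneg s), Real.sqrt_sq (by linarith)]]
    apply Real.sqrt_le_sqrt
    rw [hs2]
    nlinarith [haa]
  have hsc : 2 * (s * Real.sqrt a) + 2 * (s * a) ≤ A ^ 2 * s - 2 * (A * B * s) := by
    have h := mul_le_mul_of_nonneg_left hkey (show (0:ℝ) ≤ s by linarith)
    calc 2 * (s * Real.sqrt a) + 2 * (s * a) = s * c := by rw [hc]; ring
      _ ≤ s * (A ^ 2 - 2 * A * B) := h
      _ = A ^ 2 * s - 2 * (A * B * s) := by ring
  have hsa : 2 * a ≤ 2 * (s * a) := by nlinarith [mul_nonneg (sub_nonneg.mpr hs1) haa]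
  linarith [h2, h3, hsc, hsa]
end

section
/- Let g: ℝ → ℝ be even with finite fourth moments of g(X) for X ~ N(0,1), and let X, X̃, ε be independent N(0,1). Then Var((g(X) - X + ε)²) - Var((g(X) - X̃ + ε)²) = 6 E[X² g(X)²] - 6 E[g(X)²]. -/
open MeasureTheory ProbabilityTheory Real
open scoped NNReal ENNReal

lemma my_intk (k : ℕ) : Integrable (fun x : ℝ => x ^ k * rexp (-x ^ 2 / 2)) := by
  have h := integrable_rpow_mul_exp_neg_mul_sq (b := (1:ℝ)/2) (by norm_num)
    (s := (k : ℝ)) (by exact_mod_cast neg_one_lt_zero.trans_le (Nat.cast_nonneg k))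
  have : (fun x : ℝ => x ^ (k:ℝ) * rexp (-(1/2) * x ^ 2))
      = fun x : ℝ => x ^ k * rexp (-x ^ 2 / 2) := by
    funext x
    rw [Real.rpow_natCast]
    ring_nf
  rwa [this] at h

lemma my_poly_int (a b c : ℝ) (i j k : ℕ) :
    Integrable (fun x : ℝ => (a * x ^ i + b * x ^ j + c * x ^ k) * rexp (-x ^ 2 / 2)) := by
  have h := (((my_intk i).const_mul a).add ((my_intk j).const_mul b)).add
    ((my_intk k).const_mul c)
  refine h.congr (Filter.Eventually.of_forall fun x => ?_)
  simp only [Pi.add_apply]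
  ring

lemma my_exp_deriv (x : ℝ) : HasDerivAt (fun y : ℝ => rexp (-y ^ 2 / 2)) (rexp (-x ^ 2 / 2) * (-x)) x := by
  have h1 : HasDerivAt (fun y : ℝ => -y ^ 2 / 2) (-x) x := by
    have := ((hasDerivAt_pow 2 x).neg).div_const 2
    refine this.congr_deriv ?_
    norm_num
    ring
  exact h1.exp

lemma my_key2 : ∫ x : ℝ, (x ^ 2 - 1) * rexp (-x ^ 2 / 2) = 0 := by
  have hderiv : ∀ x : ℝ, HasDerivAt (fun y : ℝ => -y * rexp (-y ^ 2 / 2))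
      ((x ^ 2 - 1) * rexp (-x ^ 2 / 2)) x := by
    intro x
    have h := ((hasDerivAt_id x).neg.mul (my_exp_deriv x))
    refine h.congr_deriv ?_
    simp only [Pi.neg_apply, id_eq]
    ring
  have hint : Integrable (fun x : ℝ => (x ^ 2 - 1) * rexp (-x ^ 2 / 2)) := by
    have h := my_poly_int 1 (-1) 0 2 0 0
    refine h.congr (Filter.Eventually.of_forall fun x => ?_)
    ring
  have hf : Integrable (fun x : ℝ => -x * rexp (-x ^ 2 / 2)) := by
    have h := my_poly_int (-1) 0 0 1 0 0
    refine h.congr (Filter.Eventually.of_forall fun x => ?_)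
    ring
  exact integral_eq_zero_of_hasDerivAt_of_integrable hderiv hint hf

lemma my_key4 : ∫ x : ℝ, (x ^ 4 - 3 * x ^ 2) * rexp (-x ^ 2 / 2) = 0 := by
  have hderiv : ∀ x : ℝ, HasDerivAt (fun y : ℝ => -y ^ 3 * rexp (-y ^ 2 / 2))
      ((x ^ 4 - 3 * x ^ 2) * rexp (-x ^ 2 / 2)) x := by
    intro x
    have h := ((hasDerivAt_pow 3 x).neg.mul (my_exp_deriv x))
    refine h.congr_deriv ?_
    simp
    ring
  have hint : Integrable (fun x : ℝ => (x ^ 4 - 3 * x ^ 2) * rexp (-x ^ 2 / 2)) := by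
    have h := my_poly_int 1 (-3) 0 4 2 0
    refine h.congr (Filter.Eventually.of_forall fun x => ?_)
    ring
  have hf : Integrable (fun x : ℝ => -x ^ 3 * rexp (-x ^ 2 / 2)) := by
    have h := my_poly_int (-1) 0 0 3 0 0
    refine h.congr (Filter.Eventually.of_forall fun x => ?_)
    ring
  exact integral_eq_zero_of_hasDerivAt_of_integrable hderiv hint hf

lemma my_pdf_eq (x : ℝ) : gaussianPDFReal 0 1 x = (√(2 * π))⁻¹ * rexp (-x ^ 2 / 2) := by
  simp [gaussianPDFReal]

lemma my_gauss_integral (h : ℝ → ℝ) :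
    ∫ x, h x ∂(gaussianReal 0 1) = ∫ x, gaussianPDFReal 0 1 x * h x := by
  rw [gaussianReal_of_var_ne_zero 0 one_ne_zero]
  have hd : gaussianPDF 0 1 = fun x => ((Real.toNNReal (gaussianPDFReal 0 1 x) : ℝ≥0) : ℝ≥0∞) := rfl
  rw [hd, integral_withDensity_eq_integral_smul (by
    exact (measurable_gaussianPDFReal 0 1).real_toNNReal) h]
  congr 1
  funext x
  rw [NNReal.smul_def, Real.coe_toNNReal _ (gaussianPDFReal_nonneg 0 1 x), smul_eq_mul]

lemma my_ipdfk (k : ℕ) : Integrable (fun x : ℝ => gaussianPDFReal 0 1 x * x ^ k) := by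
  have h := (my_intk k).const_mul (√(2 * π))⁻¹
  refine h.congr (Filter.Eventually.of_forall fun x => ?_)
  simp only [my_pdf_eq]
  ring

lemma my_m2' : ∫ x : ℝ, gaussianPDFReal 0 1 x * x ^ 2 = 1 := by
  have h2 : Integrable (fun x : ℝ => (x ^ 2 - 1) * rexp (-x ^ 2 / 2)) := by
    refine (my_poly_int 1 (-1) 0 2 0 0).congr (Filter.Eventually.of_forall fun x => ?_)
    ring
  have e : (fun x : ℝ => gaussianPDFReal 0 1 x * x ^ 2)
      = fun x : ℝ => gaussianPDFReal 0 1 x + (√(2 * π))⁻¹ * ((x ^ 2 - 1) * rexp (-x ^ 2 / 2)) := by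
    funext x
    simp only [my_pdf_eq]
    ring
  rw [e, integral_add (integrable_gaussianPDFReal 0 1) (h2.const_mul _), integral_const_mul,
    my_key2, integral_gaussianPDFReal_eq_one 0 one_ne_zero]
  ring

lemma my_m4' : ∫ x : ℝ, gaussianPDFReal 0 1 x * x ^ 4 = 3 := by
  have h4 : Integrable (fun x : ℝ => (x ^ 4 - 3 * x ^ 2) * rexp (-x ^ 2 / 2)) := by
    refine (my_poly_int 1 (-3) 0 4 2 0).congr (Filter.Eventually.of_forall fun x => ?_)
    ring
  have e : (fun x : ℝ => gaussianPDFReal 0 1 x * x ^ 4)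
      = fun x : ℝ => 3 * (gaussianPDFReal 0 1 x * x ^ 2)
          + (√(2 * π))⁻¹ * ((x ^ 4 - 3 * x ^ 2) * rexp (-x ^ 2 / 2)) := by
    funext x
    simp only [my_pdf_eq]
    ring
  rw [e, integral_add ((my_ipdfk 2).const_mul 3) (h4.const_mul _), integral_const_mul,
    integral_const_mul, my_key4, my_m2']
  ring

lemma my_m2 : ∫ x : ℝ, x ^ 2 ∂(gaussianReal 0 1) = 1 := by
  rw [my_gauss_integral]; exact my_m2'

lemma my_m4 : ∫ x : ℝ, x ^ 4 ∂(gaussianReal 0 1) = 3 := by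
  rw [my_gauss_integral]; exact my_m4'

lemma my_map_neg : Measure.map (fun x : ℝ => -x) (gaussianReal 0 1) = gaussianReal 0 1 := by
  have h := gaussianReal_map_const_mul (μ := 0) (v := 1) (-1)
  have e1 : ((-1 : ℝ) * ·) = (fun x : ℝ => -x) := by funext x; ring
  have e2 : (NNReal.mk ((-1 : ℝ) ^ 2) (sq_nonneg _)) * (1 : ℝ≥0) = 1 := by
    ext; norm_num
  rw [e1, e2] at h
  simpa using h

lemma my_odd (f : ℝ → ℝ) (hodd : ∀ x, f (-x) = -f x) :
    ∫ x, f x ∂(gaussianReal 0 1) = 0 := by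
  have e : ∫ x, f x ∂(gaussianReal 0 1) = ∫ x, f (-x) ∂(gaussianReal 0 1) := by
    conv_lhs => rw [← my_map_neg]
    have : Measure.map (fun x : ℝ => -x) (gaussianReal 0 1)
        = Measure.map (MeasurableEquiv.neg ℝ) (gaussianReal 0 1) := rfl
    rw [this, integral_map_equiv]
    rfl
  have e2 : ∫ x, f (-x) ∂(gaussianReal 0 1) = -∫ x, f x ∂(gaussianReal 0 1) := by
    simp_rw [hodd]
    exact integral_neg f
  linarith
open MeasureTheory ProbabilityTheory Real

lemma my_iIndepFun_congr {Ω : Type*} [MeasurableSpace Ω] {P : Measure Ω}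
    {f f' : Fin 3 → Ω → ℝ}
    (h : iIndepFun f P) (h' : ∀ i, f i =ᵐ[P] f' i) :
    iIndepFun f' P := by
  rw [iIndepFun_iff_measure_inter_preimage_eq_mul] at h ⊢
  intro S sets hsets
  have key : ∀ i, P (f' i ⁻¹' sets i) = P (f i ⁻¹' sets i) := by
    intro i
    refine measure_congr ?_
    filter_upwards [h' i] with ω hω
    show (f' i ω ∈ sets i) = (f i ω ∈ sets i)
    rw [hω]
  have hae : ∀ᵐ ω ∂P, ∀ i, f i ω = f' i ω := ae_all_iff.2 h'
  calc P (⋂ i ∈ S, f' i ⁻¹' sets i) = P (⋂ i ∈ S, f i ⁻¹' sets i) := by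
        refine measure_congr ?_
        filter_upwards [hae] with ω hω
        show (ω ∈ ⋂ i ∈ S, f' i ⁻¹' sets i) = (ω ∈ ⋂ i ∈ S, f i ⁻¹' sets i)
        simp only [Set.mem_iInter, Set.mem_preimage, hω]
    _ = ∏ i ∈ S, P (f i ⁻¹' sets i) := h S hsets
    _ = ∏ i ∈ S, P (f' i ⁻¹' sets i) := Finset.prod_congr rfl fun i _ => (key i).symm

open MeasureTheory ProbabilityTheory

lemma my_variance_congr {Ω : Type*} [MeasurableSpace Ω] {P : Measure Ω} {f h : Ω → ℝ}
    (hfh : f =ᵐ[P] h) : variance f P = variance h P := by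
  have h1 : P[f] = P[h] := integral_congr_ae hfh
  have h2 : evariance f P = evariance h P := by
    rw [evariance, evariance, h1]
    exact lintegral_congr_ae (hfh.mono fun ω hω => by simp only []; rw [hω])
  rw [variance, variance, h2]

/-- For an even measurable `g` with all the appearing moments finite, and
`X, X̃, ε` mutually independent standard Gaussians,
`Var((g(X)-X+ε)²) - Var((g(X)-X̃+ε)²) = 6 E[X²g(X)²] - 6 E[g(X)²]`. -/
theorem variance_score_difference
    {Ω : Type*} [MeasurableSpace Ω] (P : Measure Ω) [IsProbabilityMeasure P]
    (X Xt ε : Ω → ℝ) (g : ℝ → ℝ)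
    (hindep : iIndepFun ![X, Xt, ε] P)
    (hX : Measure.map X P = gaussianReal 0 1)
    (hXt : Measure.map Xt P = gaussianReal 0 1)
    (hε : Measure.map ε P = gaussianReal 0 1)
    (hg : Measurable g) (hgeven : ∀ x, g (-x) = g x)
    (hmom : ∀ a b : ℕ, a + b ≤ 4 →
      Integrable (fun x => |x| ^ a * |g x| ^ b) (gaussianReal 0 1)) :
    variance (fun ω => (g (X ω) - X ω + ε ω) ^ 2) P -
        variance (fun ω => (g (X ω) - Xt ω + ε ω) ^ 2) P
      = 6 * ∫ x, x ^ 2 * g x ^ 2 ∂(gaussianReal 0 1)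
        - 6 * ∫ x, g x ^ 2 ∂(gaussianReal 0 1) := by
  -- ae-measurability of the three random variables
  have hne : ∀ T : Ω → ℝ, Measure.map T P = gaussianReal 0 1 → AEMeasurable T P := by
    intro T hT
    by_contra h
    rw [Measure.map_of_not_aemeasurable h] at hT
    have h1 : (0 : Measure ℝ) Set.univ = (gaussianReal 0 1) Set.univ := by rw [hT]
    simp at h1
  have hXae : AEMeasurable X P := hne X hX
  have hXtae : AEMeasurable Xt P := hne Xt hXt
  have hεae : AEMeasurable ε P := hne ε hε
  set X' : Ω → ℝ := hXae.mk X with hX'def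
  set Xt' : Ω → ℝ := hXtae.mk Xt with hXt'def
  set ε' : Ω → ℝ := hεae.mk ε with hε'def
  have hX'm : Measurable X' := hXae.measurable_mk
  have hXt'm : Measurable Xt' := hXtae.measurable_mk
  have hε'm : Measurable ε' := hεae.measurable_mk
  have hX'ae : X =ᵐ[P] X' := hXae.ae_eq_mk
  have hXt'ae : Xt =ᵐ[P] Xt' := hXtae.ae_eq_mk
  have hε'ae : ε =ᵐ[P] ε' := hεae.ae_eq_mk
  have hmapX' : Measure.map X' P = gaussianReal 0 1 := by
    rw [← Measure.map_congr hX'ae]; exact hX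
  have hmapXt' : Measure.map Xt' P = gaussianReal 0 1 := by
    rw [← Measure.map_congr hXt'ae]; exact hXt
  have hmapε' : Measure.map ε' P = gaussianReal 0 1 := by
    rw [← Measure.map_congr hε'ae]; exact hε
  have hindep' : iIndepFun ![X', Xt', ε'] P := by
    refine my_iIndepFun_congr hindep ?_
    intro i
    fin_cases i
    · simpa using hX'ae
    · simpa using hXt'ae
    · simpa using hε'ae
  -- independence facts
  have iXY : IndepFun X' Xt' P := by
    have h := hindep'.indepFun (i := 0) (j := 1) (by decide)
    simpa using h
  have iXe : IndepFun X' ε' P := by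
    have h := hindep'.indepFun (i := 0) (j := 2) (by decide)
    simpa using h
  have hmeas3 : ∀ i, Measurable (![X', Xt', ε'] i) := by
    intro i; fin_cases i <;> simpa
  have ipair : IndepFun (fun ω => (X' ω, Xt' ω)) ε' P := by
    have h := hindep'.indepFun_prodMk hmeas3 0 1 2 (by decide) (by decide)
    simpa using h
  -- transfer helpers
  have gint : ∀ T : Ω → ℝ, Measurable T → Measure.map T P = gaussianReal 0 1 →
      ∀ w : ℝ → ℝ, Measurable w → Integrable w (gaussianReal 0 1) →
      Integrable (fun ω => w (T ω)) P := by
    intro T hT hmap w hw hiw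
    have h := (integrable_map_measure (f := T) (g := w)
      (by rw [hmap]; exact hw.aestronglyMeasurable) hT.aemeasurable).1
      (by rw [hmap]; exact hiw)
    exact h
  have geq : ∀ T : Ω → ℝ, Measurable T → Measure.map T P = gaussianReal 0 1 →
      ∀ w : ℝ → ℝ, Measurable w →
      ∫ ω, w (T ω) ∂P = ∫ x, w x ∂(gaussianReal 0 1) := by
    intro T hT hmap w hw
    rw [← hmap]
    exact (integral_map hT.aemeasurable
      (by rw [hmap]; exact hw.aestronglyMeasurable)).symm
  -- integrability of monomials under the gaussian measure
  have hmono : ∀ a b : ℕ, a + b ≤ 4 →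
      Integrable (fun x => x ^ a * g x ^ b) (gaussianReal 0 1) := by
    intro a b hab
    refine (hmom a b hab).mono
      (((measurable_id.pow_const a).mul (hg.pow_const b)).aestronglyMeasurable) ?_
    refine Filter.Eventually.of_forall fun x => ?_
    simp [abs_mul, abs_pow, abs_abs, le_refl]
  have hxa : ∀ a : ℕ, a ≤ 4 → Integrable (fun x : ℝ => x ^ a) (gaussianReal 0 1) := by
    intro a ha
    have h := hmono a 0 (by omega)
    simpa using h
  have hgb : ∀ b : ℕ, b ≤ 4 → Integrable (fun x => g x ^ b) (gaussianReal 0 1) := by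
    intro b hb
    have h := hmono 0 b (by omega)
    simpa using h
  -- odd moments vanish
  have o_x1 : ∫ x : ℝ, x ^ 1 ∂(gaussianReal 0 1) = 0 :=
    my_odd _ (fun x => by ring)
  have o_x3 : ∫ x : ℝ, x ^ 3 ∂(gaussianReal 0 1) = 0 :=
    my_odd _ (fun x => by ring)
  have o_xg : ∫ x, x * g x ∂(gaussianReal 0 1) = 0 :=
    my_odd _ (fun x => by rw [hgeven]; ring)
  have o_xg3 : ∫ x, x * g x ^ 3 ∂(gaussianReal 0 1) = 0 :=
    my_odd _ (fun x => by rw [hgeven]; ring)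
  have o_x3g : ∫ x, x ^ 3 * g x ∂(gaussianReal 0 1) = 0 :=
    my_odd _ (fun x => by rw [hgeven]; ring)
  -- integrability of (g x - x)^k under the gaussian
  have ixg : Integrable (fun x => x * g x) (gaussianReal 0 1) := by
    have h := hmono 1 1 (by omega); simpa using h
  have ixg3 : Integrable (fun x => x * g x ^ 3) (gaussianReal 0 1) := by
    have h := hmono 1 3 (by omega); simpa using h
  have ix3g : Integrable (fun x => x ^ 3 * g x) (gaussianReal 0 1) := by
    have h := hmono 3 1 (by omega); simpa using h
  have ix2g2 : Integrable (fun x => x ^ 2 * g x ^ 2) (gaussianReal 0 1) :=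
    hmono 2 2 (by omega)
  have iu1 : Integrable (fun x => g x - x) (gaussianReal 0 1) := by
    have h := (hgb 1 (by omega)).sub (hxa 1 (by omega))
    refine h.congr (Filter.Eventually.of_forall fun x => ?_)
    simp only [Pi.sub_apply]; ring
  have iu2 : Integrable (fun x => (g x - x) ^ 2) (gaussianReal 0 1) := by
    have h := ((hgb 2 (by omega)).sub (ixg.const_mul 2)).add (hxa 2 (by omega))
    refine h.congr (Filter.Eventually.of_forall fun x => ?_)
    simp only [Pi.add_apply, Pi.sub_apply]; ring
  have iu3 : Integrable (fun x => (g x - x) ^ 3) (gaussianReal 0 1) := by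
    have h := (((hgb 3 (by omega)).sub ((hmono 1 2 (by omega)).const_mul 3)).add
      ((hmono 2 1 (by omega)).const_mul 3)).sub (hxa 3 (by omega))
    refine h.congr (Filter.Eventually.of_forall fun x => ?_)
    simp only [Pi.add_apply, Pi.sub_apply]; ring
  have iu4 : Integrable (fun x => (g x - x) ^ 4) (gaussianReal 0 1) := by
    have h := ((((hgb 4 (by omega)).sub (ixg3.const_mul 4)).add
      (ix2g2.const_mul 6)).sub (ix3g.const_mul 4)).add (hxa 4 (by omega))
    refine h.congr (Filter.Eventually.of_forall fun x => ?_)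
    simp only [Pi.add_apply, Pi.sub_apply]; ring
  -- gaussian values of u-moments
  have hu2v : ∫ x, (g x - x) ^ 2 ∂(gaussianReal 0 1)
      = (∫ x, g x ^ 2 ∂(gaussianReal 0 1)) + 1 := by
    have j1 : Integrable (fun x => 2 * (x * g x)) (gaussianReal 0 1) := ixg.const_mul 2
    have j2 : Integrable (fun x => g x ^ 2 - 2 * (x * g x)) (gaussianReal 0 1) :=
      (hgb 2 (by omega)).sub j1
    rw [show (fun x => (g x - x) ^ 2) = fun x => g x ^ 2 - 2 * (x * g x) + x ^ 2 from
      funext fun x => by ring]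
    rw [integral_add j2 (hxa 2 (by omega)), integral_sub (hgb 2 (by omega)) j1,
      integral_const_mul, o_xg, my_m2]
    ring
  have hu4v : ∫ x, (g x - x) ^ 4 ∂(gaussianReal 0 1)
      = (∫ x, g x ^ 4 ∂(gaussianReal 0 1))
        + 6 * (∫ x, x ^ 2 * g x ^ 2 ∂(gaussianReal 0 1)) + 3 := by
    have j1 : Integrable (fun x => 4 * (x * g x ^ 3)) (gaussianReal 0 1) := ixg3.const_mul 4
    have j2 : Integrable (fun x => 6 * (x ^ 2 * g x ^ 2)) (gaussianReal 0 1) := ix2g2.const_mul 6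
    have j3 : Integrable (fun x => 4 * (x ^ 3 * g x)) (gaussianReal 0 1) := ix3g.const_mul 4
    have j4 : Integrable (fun x => g x ^ 4 - 4 * (x * g x ^ 3)) (gaussianReal 0 1) :=
      (hgb 4 (by omega)).sub j1
    have j5 : Integrable (fun x => g x ^ 4 - 4 * (x * g x ^ 3) + 6 * (x ^ 2 * g x ^ 2))
        (gaussianReal 0 1) := j4.add j2
    have j6 : Integrable
        (fun x => g x ^ 4 - 4 * (x * g x ^ 3) + 6 * (x ^ 2 * g x ^ 2) - 4 * (x ^ 3 * g x))
        (gaussianReal 0 1) := j5.sub j3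
    rw [show (fun x => (g x - x) ^ 4) = fun x =>
      g x ^ 4 - 4 * (x * g x ^ 3) + 6 * (x ^ 2 * g x ^ 2) - 4 * (x ^ 3 * g x) + x ^ 4 from
      funext fun x => by ring]
    rw [integral_add j6 (hxa 4 (by omega)), integral_sub j5 j3, integral_add j4 j2,
      integral_sub (hgb 4 (by omega)) j1,
      integral_const_mul, integral_const_mul, integral_const_mul,
      o_xg3, o_x3g, my_m4]
    ring
  -- product helpers
  have hUE : ∀ w : ℝ → ℝ, Measurable w → Integrable w (gaussianReal 0 1) → ∀ j : ℕ, j ≤ 4 →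
      Integrable (fun ω => w (X' ω) * ε' ω ^ j) P ∧
      ∫ ω, w (X' ω) * ε' ω ^ j ∂P
        = (∫ x, w x ∂(gaussianReal 0 1)) * ∫ x : ℝ, x ^ j ∂(gaussianReal 0 1) := by
    intro w hw hiw j hj
    have hind : IndepFun (fun ω => w (X' ω)) (fun ω => ε' ω ^ j) P :=
      iXe.comp hw (measurable_id.pow_const j)
    have i1 : Integrable (fun ω => w (X' ω)) P := gint X' hX'm hmapX' w hw hiw
    have i2 : Integrable (fun ω => ε' ω ^ j) P :=
      gint ε' hε'm hmapε' (fun x => x ^ j) (measurable_id.pow_const j) (hxa j hj)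
    refine ⟨hind.integrable_mul i1 i2, ?_⟩
    have h2 : ∫ ω, w (X' ω) * ε' ω ^ j ∂P
        = (∫ ω, w (X' ω) ∂P) * ∫ ω, ε' ω ^ j ∂P :=
      hind.integral_mul_eq_mul_integral i1.aestronglyMeasurable i2.aestronglyMeasurable
    have h3 : ∫ ω, ε' ω ^ j ∂P = ∫ x : ℝ, x ^ j ∂(gaussianReal 0 1) :=
      geq ε' hε'm hmapε' (fun x => x ^ j) (measurable_id.pow_const j)
    rw [h2, h3, geq X' hX'm hmapX' w hw]
  have hYT : ∀ a b : ℕ, a ≤ 4 → b ≤ 4 →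
      Integrable (fun ω => g (X' ω) ^ a * Xt' ω ^ b) P ∧
      ∫ ω, g (X' ω) ^ a * Xt' ω ^ b ∂P
        = (∫ x, g x ^ a ∂(gaussianReal 0 1)) * ∫ x : ℝ, x ^ b ∂(gaussianReal 0 1) := by
    intro a b ha hb
    have hind : IndepFun (fun ω => g (X' ω) ^ a) (fun ω => Xt' ω ^ b) P :=
      iXY.comp (hg.pow_const a) (measurable_id.pow_const b)
    have i1 : Integrable (fun ω => g (X' ω) ^ a) P :=
      gint X' hX'm hmapX' (fun x => g x ^ a) (hg.pow_const a) (hgb a ha)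
    have i2 : Integrable (fun ω => Xt' ω ^ b) P :=
      gint Xt' hXt'm hmapXt' (fun x => x ^ b) (measurable_id.pow_const b) (hxa b hb)
    refine ⟨hind.integrable_mul i1 i2, ?_⟩
    have h2 : ∫ ω, g (X' ω) ^ a * Xt' ω ^ b ∂P
        = (∫ ω, g (X' ω) ^ a ∂P) * ∫ ω, Xt' ω ^ b ∂P :=
      hind.integral_mul_eq_mul_integral i1.aestronglyMeasurable i2.aestronglyMeasurable
    have h3 : ∫ ω, g (X' ω) ^ a ∂P = ∫ x, g x ^ a ∂(gaussianReal 0 1) :=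
      geq X' hX'm hmapX' (fun x => g x ^ a) (hg.pow_const a)
    have h4 : ∫ ω, Xt' ω ^ b ∂P = ∫ x : ℝ, x ^ b ∂(gaussianReal 0 1) :=
      geq Xt' hXt'm hmapXt' (fun x => x ^ b) (measurable_id.pow_const b)
    rw [h2, h3, h4]
  have hVE : ∀ φ : ℝ × ℝ → ℝ, Measurable φ →
      Integrable (fun ω => φ (X' ω, Xt' ω)) P → ∀ j : ℕ, j ≤ 4 →
      Integrable (fun ω => φ (X' ω, Xt' ω) * ε' ω ^ j) P ∧
      ∫ ω, φ (X' ω, Xt' ω) * ε' ω ^ j ∂P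
        = (∫ ω, φ (X' ω, Xt' ω) ∂P) * ∫ x : ℝ, x ^ j ∂(gaussianReal 0 1) := by
    intro φ hφ hiφ j hj
    have hind : IndepFun (fun ω => φ (X' ω, Xt' ω)) (fun ω => ε' ω ^ j) P :=
      ipair.comp hφ (measurable_id.pow_const j)
    have i2 : Integrable (fun ω => ε' ω ^ j) P :=
      gint ε' hε'm hmapε' (fun x => x ^ j) (measurable_id.pow_const j) (hxa j hj)
    refine ⟨hind.integrable_mul hiφ i2, ?_⟩
    have h2 : ∫ ω, φ (X' ω, Xt' ω) * ε' ω ^ j ∂P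
        = (∫ ω, φ (X' ω, Xt' ω) ∂P) * ∫ ω, ε' ω ^ j ∂P :=
      hind.integral_mul_eq_mul_integral hiφ.aestronglyMeasurable i2.aestronglyMeasurable
    have h3 : ∫ ω, ε' ω ^ j ∂P = ∫ x : ℝ, x ^ j ∂(gaussianReal 0 1) :=
      geq ε' hε'm hmapε' (fun x => x ^ j) (measurable_id.pow_const j)
    rw [h2, h3]
  -- A-side computations
  have hum : Measurable (fun x => g x - x) := hg.sub measurable_id
  have iA_u2 : Integrable (fun ω => (g (X' ω) - X' ω) ^ 2) P :=
    gint X' hX'm hmapX' (fun x => (g x - x) ^ 2) (hum.pow_const 2) iu2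
  have iA_u4 : Integrable (fun ω => (g (X' ω) - X' ω) ^ 4) P :=
    gint X' hX'm hmapX' (fun x => (g x - x) ^ 4) (hum.pow_const 4) iu4
  have hA_u2 : ∫ ω, (g (X' ω) - X' ω) ^ 2 ∂P = ∫ x, (g x - x) ^ 2 ∂(gaussianReal 0 1) :=
    geq X' hX'm hmapX' (fun x => (g x - x) ^ 2) (hum.pow_const 2)
  have hA_u4 : ∫ ω, (g (X' ω) - X' ω) ^ 4 ∂P = ∫ x, (g x - x) ^ 4 ∂(gaussianReal 0 1) :=
    geq X' hX'm hmapX' (fun x => (g x - x) ^ 4) (hum.pow_const 4)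
  have iA_e2 : Integrable (fun ω => ε' ω ^ 2) P :=
    gint ε' hε'm hmapε' (fun x => x ^ 2) (measurable_id.pow_const 2) (hxa 2 (by omega))
  have iA_e4 : Integrable (fun ω => ε' ω ^ 4) P :=
    gint ε' hε'm hmapε' (fun x => x ^ 4) (measurable_id.pow_const 4) (hxa 4 (by omega))
  have hA_e2 : ∫ ω, ε' ω ^ 2 ∂P = ∫ x : ℝ, x ^ 2 ∂(gaussianReal 0 1) :=
    geq ε' hε'm hmapε' (fun x => x ^ 2) (measurable_id.pow_const 2)
  have hA_e4 : ∫ ω, ε' ω ^ 4 ∂P = ∫ x : ℝ, x ^ 4 ∂(gaussianReal 0 1) :=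
    geq ε' hε'm hmapε' (fun x => x ^ 4) (measurable_id.pow_const 4)
  have pU11 := hUE (fun x => g x - x) hum iu1 1 (by omega)
  have pU31 := hUE (fun x => (g x - x) ^ 3) (hum.pow_const 3) iu3 1 (by omega)
  have pU22 := hUE (fun x => (g x - x) ^ 2) (hum.pow_const 2) iu2 2 (by omega)
  have pU13 := hUE (fun x => g x - x) hum iu1 3 (by omega)
  have iA_ue : Integrable (fun ω => (g (X' ω) - X' ω) * ε' ω ^ 1) P := pU11.1
  have hA_ue : ∫ ω, (g (X' ω) - X' ω) * ε' ω ^ 1 ∂P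
      = (∫ x, (g x - x) ∂(gaussianReal 0 1)) * ∫ x : ℝ, x ^ 1 ∂(gaussianReal 0 1) := pU11.2
  have iA_u3e : Integrable (fun ω => (g (X' ω) - X' ω) ^ 3 * ε' ω ^ 1) P := pU31.1
  have hA_u3e : ∫ ω, (g (X' ω) - X' ω) ^ 3 * ε' ω ^ 1 ∂P
      = (∫ x, (g x - x) ^ 3 ∂(gaussianReal 0 1)) * ∫ x : ℝ, x ^ 1 ∂(gaussianReal 0 1) := pU31.2
  have iA_u2e2 : Integrable (fun ω => (g (X' ω) - X' ω) ^ 2 * ε' ω ^ 2) P := pU22.1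
  have hA_u2e2 : ∫ ω, (g (X' ω) - X' ω) ^ 2 * ε' ω ^ 2 ∂P
      = (∫ x, (g x - x) ^ 2 ∂(gaussianReal 0 1)) * ∫ x : ℝ, x ^ 2 ∂(gaussianReal 0 1) := pU22.2
  have iA_ue3 : Integrable (fun ω => (g (X' ω) - X' ω) * ε' ω ^ 3) P := pU13.1
  have hA_ue3 : ∫ ω, (g (X' ω) - X' ω) * ε' ω ^ 3 ∂P
      = (∫ x, (g x - x) ∂(gaussianReal 0 1)) * ∫ x : ℝ, x ^ 3 ∂(gaussianReal 0 1) := pU13.2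
  have eA2 : ∫ ω, (g (X' ω) - X' ω + ε' ω) ^ 2 ∂P
      = (∫ x, (g x - x) ^ 2 ∂(gaussianReal 0 1)) + 1 := by
    have j1 : Integrable (fun ω => 2 * ((g (X' ω) - X' ω) * ε' ω ^ 1)) P := iA_ue.const_mul 2
    have j2 : Integrable
        (fun ω => (g (X' ω) - X' ω) ^ 2 + 2 * ((g (X' ω) - X' ω) * ε' ω ^ 1)) P := iA_u2.add j1
    rw [show (fun ω => (g (X' ω) - X' ω + ε' ω) ^ 2) = fun ω =>
      (g (X' ω) - X' ω) ^ 2 + 2 * ((g (X' ω) - X' ω) * ε' ω ^ 1) + ε' ω ^ 2 from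
      funext fun ω => by ring]
    rw [integral_add j2 iA_e2, integral_add iA_u2 j1, integral_const_mul, hA_ue, hA_u2, hA_e2,
      o_x1, my_m2]
    ring
  have eA4 : ∫ ω, (g (X' ω) - X' ω + ε' ω) ^ 4 ∂P
      = (∫ x, (g x - x) ^ 4 ∂(gaussianReal 0 1))
        + 6 * (∫ x, (g x - x) ^ 2 ∂(gaussianReal 0 1)) + 3 := by
    have j1 : Integrable (fun ω => 4 * ((g (X' ω) - X' ω) ^ 3 * ε' ω ^ 1)) P :=
      iA_u3e.const_mul 4
    have j2 : Integrable (fun ω => 6 * ((g (X' ω) - X' ω) ^ 2 * ε' ω ^ 2)) P :=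
      iA_u2e2.const_mul 6
    have j3 : Integrable (fun ω => 4 * ((g (X' ω) - X' ω) * ε' ω ^ 3)) P :=
      iA_ue3.const_mul 4
    have j4 : Integrable
        (fun ω => (g (X' ω) - X' ω) ^ 4 + 4 * ((g (X' ω) - X' ω) ^ 3 * ε' ω ^ 1)) P :=
      iA_u4.add j1
    have j5 : Integrable (fun ω => (g (X' ω) - X' ω) ^ 4
        + 4 * ((g (X' ω) - X' ω) ^ 3 * ε' ω ^ 1)
        + 6 * ((g (X' ω) - X' ω) ^ 2 * ε' ω ^ 2)) P := j4.add j2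
    have j6 : Integrable (fun ω => (g (X' ω) - X' ω) ^ 4
        + 4 * ((g (X' ω) - X' ω) ^ 3 * ε' ω ^ 1)
        + 6 * ((g (X' ω) - X' ω) ^ 2 * ε' ω ^ 2)
        + 4 * ((g (X' ω) - X' ω) * ε' ω ^ 3)) P := j5.add j3
    rw [show (fun ω => (g (X' ω) - X' ω + ε' ω) ^ 4) = fun ω =>
      (g (X' ω) - X' ω) ^ 4 + 4 * ((g (X' ω) - X' ω) ^ 3 * ε' ω ^ 1)
        + 6 * ((g (X' ω) - X' ω) ^ 2 * ε' ω ^ 2)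
        + 4 * ((g (X' ω) - X' ω) * ε' ω ^ 3) + ε' ω ^ 4 from
      funext fun ω => by ring]
    rw [integral_add j6 iA_e4, integral_add j5 j3, integral_add j4 j2, integral_add iA_u4 j1,
      integral_const_mul, integral_const_mul, integral_const_mul,
      hA_u3e, hA_u2e2, hA_ue3, hA_u4, hA_e4, o_x1, o_x3, my_m2, my_m4]
    ring
  -- B-side computations
  have iY : ∀ a : ℕ, a ≤ 4 → Integrable (fun ω => g (X' ω) ^ a) P := fun a ha =>
    gint X' hX'm hmapX' (fun x => g x ^ a) (hg.pow_const a) (hgb a ha)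
  have iT : ∀ b : ℕ, b ≤ 4 → Integrable (fun ω => Xt' ω ^ b) P := fun b hb =>
    gint Xt' hXt'm hmapXt' (fun x => x ^ b) (measurable_id.pow_const b) (hxa b hb)
  have hYv : ∀ a : ℕ, ∫ ω, g (X' ω) ^ a ∂P = ∫ x, g x ^ a ∂(gaussianReal 0 1) := fun a =>
    geq X' hX'm hmapX' (fun x => g x ^ a) (hg.pow_const a)
  have hTv : ∀ b : ℕ, ∫ ω, Xt' ω ^ b ∂P = ∫ x : ℝ, x ^ b ∂(gaussianReal 0 1) := fun b =>
    geq Xt' hXt'm hmapXt' (fun x => x ^ b) (measurable_id.pow_const b)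
  have q11 := hYT 1 1 (by omega) (by omega)
  have q21 := hYT 2 1 (by omega) (by omega)
  have q12 := hYT 1 2 (by omega) (by omega)
  have q31 := hYT 3 1 (by omega) (by omega)
  have q22 := hYT 2 2 (by omega) (by omega)
  have q13 := hYT 1 3 (by omega) (by omega)
  have iV1 : Integrable (fun ω => g (X' ω) - Xt' ω) P := by
    have h := (iY 1 (by omega)).sub (iT 1 (by omega))
    refine h.congr (Filter.Eventually.of_forall fun ω => ?_)
    simp only [Pi.sub_apply]; ring
  have iV2 : Integrable (fun ω => (g (X' ω) - Xt' ω) ^ 2) P := by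
    have h := ((iY 2 (by omega)).sub (q11.1.const_mul 2)).add (iT 2 (by omega))
    refine h.congr (Filter.Eventually.of_forall fun ω => ?_)
    simp only [Pi.add_apply, Pi.sub_apply]; ring
  have iV3 : Integrable (fun ω => (g (X' ω) - Xt' ω) ^ 3) P := by
    have h := (((iY 3 (by omega)).sub (q21.1.const_mul 3)).add (q12.1.const_mul 3)).sub
      (iT 3 (by omega))
    refine h.congr (Filter.Eventually.of_forall fun ω => ?_)
    simp only [Pi.add_apply, Pi.sub_apply]; ring
  have iV4 : Integrable (fun ω => (g (X' ω) - Xt' ω) ^ 4) P := by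
    have h := ((((iY 4 (by omega)).sub (q31.1.const_mul 4)).add (q22.1.const_mul 6)).sub
      (q13.1.const_mul 4)).add (iT 4 (by omega))
    refine h.congr (Filter.Eventually.of_forall fun ω => ?_)
    simp only [Pi.add_apply, Pi.sub_apply]; ring
  have eV2 : ∫ ω, (g (X' ω) - Xt' ω) ^ 2 ∂P
      = (∫ x, g x ^ 2 ∂(gaussianReal 0 1)) + 1 := by
    have k11 : Integrable (fun ω => g (X' ω) ^ 1 * Xt' ω ^ 1) P := q11.1
    have v11 : ∫ ω, g (X' ω) ^ 1 * Xt' ω ^ 1 ∂P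
        = (∫ x, g x ^ 1 ∂(gaussianReal 0 1)) * ∫ x : ℝ, x ^ 1 ∂(gaussianReal 0 1) := q11.2
    have j1 : Integrable (fun ω => 2 * (g (X' ω) ^ 1 * Xt' ω ^ 1)) P := k11.const_mul 2
    have j2 : Integrable (fun ω => g (X' ω) ^ 2 - 2 * (g (X' ω) ^ 1 * Xt' ω ^ 1)) P :=
      (iY 2 (by omega)).sub j1
    rw [show (fun ω => (g (X' ω) - Xt' ω) ^ 2) = fun ω =>
      g (X' ω) ^ 2 - 2 * (g (X' ω) ^ 1 * Xt' ω ^ 1) + Xt' ω ^ 2 from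
      funext fun ω => by ring]
    rw [integral_add j2 (iT 2 (by omega)), integral_sub (iY 2 (by omega)) j1,
      integral_const_mul, v11, hYv 2, hTv 2, o_x1, my_m2]
    ring
  have eV4 : ∫ ω, (g (X' ω) - Xt' ω) ^ 4 ∂P
      = (∫ x, g x ^ 4 ∂(gaussianReal 0 1)) + 6 * (∫ x, g x ^ 2 ∂(gaussianReal 0 1)) + 3 := by
    have k31 : Integrable (fun ω => g (X' ω) ^ 3 * Xt' ω ^ 1) P := q31.1
    have v31 : ∫ ω, g (X' ω) ^ 3 * Xt' ω ^ 1 ∂P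
        = (∫ x, g x ^ 3 ∂(gaussianReal 0 1)) * ∫ x : ℝ, x ^ 1 ∂(gaussianReal 0 1) := q31.2
    have k22 : Integrable (fun ω => g (X' ω) ^ 2 * Xt' ω ^ 2) P := q22.1
    have v22 : ∫ ω, g (X' ω) ^ 2 * Xt' ω ^ 2 ∂P
        = (∫ x, g x ^ 2 ∂(gaussianReal 0 1)) * ∫ x : ℝ, x ^ 2 ∂(gaussianReal 0 1) := q22.2
    have k13 : Integrable (fun ω => g (X' ω) ^ 1 * Xt' ω ^ 3) P := q13.1
    have v13 : ∫ ω, g (X' ω) ^ 1 * Xt' ω ^ 3 ∂P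
        = (∫ x, g x ^ 1 ∂(gaussianReal 0 1)) * ∫ x : ℝ, x ^ 3 ∂(gaussianReal 0 1) := q13.2
    have j1 : Integrable (fun ω => 4 * (g (X' ω) ^ 3 * Xt' ω ^ 1)) P := k31.const_mul 4
    have j2 : Integrable (fun ω => 6 * (g (X' ω) ^ 2 * Xt' ω ^ 2)) P := k22.const_mul 6
    have j3 : Integrable (fun ω => 4 * (g (X' ω) ^ 1 * Xt' ω ^ 3)) P := k13.const_mul 4
    have j4 : Integrable (fun ω => g (X' ω) ^ 4 - 4 * (g (X' ω) ^ 3 * Xt' ω ^ 1)) P :=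
      (iY 4 (by omega)).sub j1
    have j5 : Integrable (fun ω => g (X' ω) ^ 4 - 4 * (g (X' ω) ^ 3 * Xt' ω ^ 1)
        + 6 * (g (X' ω) ^ 2 * Xt' ω ^ 2)) P := j4.add j2
    have j6 : Integrable (fun ω => g (X' ω) ^ 4 - 4 * (g (X' ω) ^ 3 * Xt' ω ^ 1)
        + 6 * (g (X' ω) ^ 2 * Xt' ω ^ 2) - 4 * (g (X' ω) ^ 1 * Xt' ω ^ 3)) P := j5.sub j3
    rw [show (fun ω => (g (X' ω) - Xt' ω) ^ 4) = fun ω =>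
      g (X' ω) ^ 4 - 4 * (g (X' ω) ^ 3 * Xt' ω ^ 1) + 6 * (g (X' ω) ^ 2 * Xt' ω ^ 2)
        - 4 * (g (X' ω) ^ 1 * Xt' ω ^ 3) + Xt' ω ^ 4 from
      funext fun ω => by ring]
    rw [integral_add j6 (iT 4 (by omega)), integral_sub j5 j3, integral_add j4 j2,
      integral_sub (iY 4 (by omega)) j1, integral_const_mul, integral_const_mul,
      integral_const_mul, v31, v22, v13, hYv 4, hTv 4, o_x1, o_x3, my_m2, my_m4]
    ring
  have hφ1 : Measurable (fun p : ℝ × ℝ => g p.1 - p.2) :=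
    (hg.comp measurable_fst).sub measurable_snd
  have pV11 := hVE (fun p : ℝ × ℝ => g p.1 - p.2) hφ1 iV1 1 (by omega)
  have pV31 := hVE (fun p : ℝ × ℝ => (g p.1 - p.2) ^ 3) (hφ1.pow_const 3) iV3 1 (by omega)
  have pV22 := hVE (fun p : ℝ × ℝ => (g p.1 - p.2) ^ 2) (hφ1.pow_const 2) iV2 2 (by omega)
  have pV13 := hVE (fun p : ℝ × ℝ => g p.1 - p.2) hφ1 iV1 3 (by omega)
  have iB_ve : Integrable (fun ω => (g (X' ω) - Xt' ω) * ε' ω ^ 1) P := pV11.1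
  have hB_ve : ∫ ω, (g (X' ω) - Xt' ω) * ε' ω ^ 1 ∂P
      = (∫ ω, (g (X' ω) - Xt' ω) ∂P) * ∫ x : ℝ, x ^ 1 ∂(gaussianReal 0 1) := pV11.2
  have iB_v3e : Integrable (fun ω => (g (X' ω) - Xt' ω) ^ 3 * ε' ω ^ 1) P := pV31.1
  have hB_v3e : ∫ ω, (g (X' ω) - Xt' ω) ^ 3 * ε' ω ^ 1 ∂P
      = (∫ ω, (g (X' ω) - Xt' ω) ^ 3 ∂P) * ∫ x : ℝ, x ^ 1 ∂(gaussianReal 0 1) := pV31.2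
  have iB_v2e2 : Integrable (fun ω => (g (X' ω) - Xt' ω) ^ 2 * ε' ω ^ 2) P := pV22.1
  have hB_v2e2 : ∫ ω, (g (X' ω) - Xt' ω) ^ 2 * ε' ω ^ 2 ∂P
      = (∫ ω, (g (X' ω) - Xt' ω) ^ 2 ∂P) * ∫ x : ℝ, x ^ 2 ∂(gaussianReal 0 1) := pV22.2
  have iB_ve3 : Integrable (fun ω => (g (X' ω) - Xt' ω) * ε' ω ^ 3) P := pV13.1
  have hB_ve3 : ∫ ω, (g (X' ω) - Xt' ω) * ε' ω ^ 3 ∂P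
      = (∫ ω, (g (X' ω) - Xt' ω) ∂P) * ∫ x : ℝ, x ^ 3 ∂(gaussianReal 0 1) := pV13.2
  have eB2 : ∫ ω, (g (X' ω) - Xt' ω + ε' ω) ^ 2 ∂P
      = (∫ x, g x ^ 2 ∂(gaussianReal 0 1)) + 1 + 1 := by
    have j1 : Integrable (fun ω => 2 * ((g (X' ω) - Xt' ω) * ε' ω ^ 1)) P := iB_ve.const_mul 2
    have j2 : Integrable
        (fun ω => (g (X' ω) - Xt' ω) ^ 2 + 2 * ((g (X' ω) - Xt' ω) * ε' ω ^ 1)) P := iV2.add j1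
    rw [show (fun ω => (g (X' ω) - Xt' ω + ε' ω) ^ 2) = fun ω =>
      (g (X' ω) - Xt' ω) ^ 2 + 2 * ((g (X' ω) - Xt' ω) * ε' ω ^ 1) + ε' ω ^ 2 from
      funext fun ω => by ring]
    rw [integral_add j2 iA_e2, integral_add iV2 j1, integral_const_mul, hB_ve, eV2, hA_e2,
      o_x1, my_m2]
    ring
  have eB4 : ∫ ω, (g (X' ω) - Xt' ω + ε' ω) ^ 4 ∂P
      = ((∫ x, g x ^ 4 ∂(gaussianReal 0 1)) + 6 * (∫ x, g x ^ 2 ∂(gaussianReal 0 1)) + 3)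
        + 6 * ((∫ x, g x ^ 2 ∂(gaussianReal 0 1)) + 1) + 3 := by
    have j1 : Integrable (fun ω => 4 * ((g (X' ω) - Xt' ω) ^ 3 * ε' ω ^ 1)) P :=
      iB_v3e.const_mul 4
    have j2 : Integrable (fun ω => 6 * ((g (X' ω) - Xt' ω) ^ 2 * ε' ω ^ 2)) P :=
      iB_v2e2.const_mul 6
    have j3 : Integrable (fun ω => 4 * ((g (X' ω) - Xt' ω) * ε' ω ^ 3)) P :=
      iB_ve3.const_mul 4
    have j4 : Integrable
        (fun ω => (g (X' ω) - Xt' ω) ^ 4 + 4 * ((g (X' ω) - Xt' ω) ^ 3 * ε' ω ^ 1)) P :=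
      iV4.add j1
    have j5 : Integrable (fun ω => (g (X' ω) - Xt' ω) ^ 4
        + 4 * ((g (X' ω) - Xt' ω) ^ 3 * ε' ω ^ 1)
        + 6 * ((g (X' ω) - Xt' ω) ^ 2 * ε' ω ^ 2)) P := j4.add j2
    have j6 : Integrable (fun ω => (g (X' ω) - Xt' ω) ^ 4
        + 4 * ((g (X' ω) - Xt' ω) ^ 3 * ε' ω ^ 1)
        + 6 * ((g (X' ω) - Xt' ω) ^ 2 * ε' ω ^ 2)
        + 4 * ((g (X' ω) - Xt' ω) * ε' ω ^ 3)) P := j5.add j3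
    rw [show (fun ω => (g (X' ω) - Xt' ω + ε' ω) ^ 4) = fun ω =>
      (g (X' ω) - Xt' ω) ^ 4 + 4 * ((g (X' ω) - Xt' ω) ^ 3 * ε' ω ^ 1)
        + 6 * ((g (X' ω) - Xt' ω) ^ 2 * ε' ω ^ 2)
        + 4 * ((g (X' ω) - Xt' ω) * ε' ω ^ 3) + ε' ω ^ 4 from
      funext fun ω => by ring]
    rw [integral_add j6 iA_e4, integral_add j5 j3, integral_add j4 j2, integral_add iV4 j1,
      integral_const_mul, integral_const_mul, integral_const_mul,
      hB_v3e, hB_v2e2, hB_ve3, eV4, eV2, hA_e4, o_x1, o_x3, my_m2, my_m4]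
    ring
  -- variance assembly
  have iA4tot : Integrable (fun ω => (g (X' ω) - X' ω + ε' ω) ^ 4) P := by
    have h := (((iA_u4.add (iA_u3e.const_mul 4)).add (iA_u2e2.const_mul 6)).add
      (iA_ue3.const_mul 4)).add iA_e4
    refine h.congr (Filter.Eventually.of_forall fun ω => ?_)
    simp only [Pi.add_apply]; ring
  have iB4tot : Integrable (fun ω => (g (X' ω) - Xt' ω + ε' ω) ^ 4) P := by
    have h := (((iV4.add (iB_v3e.const_mul 4)).add (iB_v2e2.const_mul 6)).add
      (iB_ve3.const_mul 4)).add iA_e4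
    refine h.congr (Filter.Eventually.of_forall fun ω => ?_)
    simp only [Pi.add_apply]; ring
  have hMemA : MemLp (fun ω => (g (X' ω) - X' ω + ε' ω) ^ 2) 2 P := by
    refine (memLp_two_iff_integrable_sq ?_).2 ?_
    · exact ((((hg.comp hX'm).sub hX'm).add hε'm).pow_const 2).aestronglyMeasurable
    · refine iA4tot.congr (Filter.Eventually.of_forall fun ω => ?_)
      ring
  have hMemB : MemLp (fun ω => (g (X' ω) - Xt' ω + ε' ω) ^ 2) 2 P := by
    refine (memLp_two_iff_integrable_sq ?_).2 ?_
    · exact ((((hg.comp hX'm).sub hXt'm).add hε'm).pow_const 2).aestronglyMeasurable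
    · refine iB4tot.congr (Filter.Eventually.of_forall fun ω => ?_)
      ring
  have hvarA : variance (fun ω => (g (X' ω) - X' ω + ε' ω) ^ 2) P
      = (∫ ω, (g (X' ω) - X' ω + ε' ω) ^ 4 ∂P)
        - (∫ ω, (g (X' ω) - X' ω + ε' ω) ^ 2 ∂P) ^ 2 := by
    rw [variance_eq_sub hMemA]
    congr 1
    rw [show (fun ω => (g (X' ω) - X' ω + ε' ω) ^ 2) ^ 2
      = fun ω => (g (X' ω) - X' ω + ε' ω) ^ 4 from funext fun ω => by
        simp only [Pi.pow_apply]; ring]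
  have hvarB : variance (fun ω => (g (X' ω) - Xt' ω + ε' ω) ^ 2) P
      = (∫ ω, (g (X' ω) - Xt' ω + ε' ω) ^ 4 ∂P)
        - (∫ ω, (g (X' ω) - Xt' ω + ε' ω) ^ 2 ∂P) ^ 2 := by
    rw [variance_eq_sub hMemB]
    congr 1
    rw [show (fun ω => (g (X' ω) - Xt' ω + ε' ω) ^ 2) ^ 2
      = fun ω => (g (X' ω) - Xt' ω + ε' ω) ^ 4 from funext fun ω => by
        simp only [Pi.pow_apply]; ring]
  have hcongrA : variance (fun ω => (g (X ω) - X ω + ε ω) ^ 2) P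
      = variance (fun ω => (g (X' ω) - X' ω + ε' ω) ^ 2) P := by
    refine my_variance_congr ?_
    filter_upwards [hX'ae, hε'ae] with ω h1 h2
    rw [h1, h2]
  have hcongrB : variance (fun ω => (g (X ω) - Xt ω + ε ω) ^ 2) P
      = variance (fun ω => (g (X' ω) - Xt' ω + ε' ω) ^ 2) P := by
    refine my_variance_congr ?_
    filter_upwards [hX'ae, hXt'ae, hε'ae] with ω h1 h2 h3
    rw [h1, h2, h3]
  rw [hcongrA, hcongrB, hvarA, hvarB, eA4, eA2, eB4, eB2, hu4v, hu2v]
  ring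
end

section
/- For X ~ N(0,1) and g(x) = 1/√(θ² + x²) with 0 < θ, we have E[g(X)²] ≥ (1/θ)√(π/2) - 2/√π. -/
open MeasureTheory ProbabilityTheory

lemma my_arctan_le_self {x : ℝ} (hx : 0 ≤ x) : Real.arctan x ≤ x := by
  have h := Real.le_tan (x := Real.arctan x) (by
      rw [← Real.arctan_zero]; exact Real.arctan_strictMono.monotone hx)
    (Real.arctan_lt_pi_div_two x)
  rwa [Real.tan_arctan] at h

lemma my_integral_inv_sq_add (θ : ℝ) (hθ : 0 < θ) (a b : ℝ) :
    (∫ x in a..b, (θ ^ 2 + x ^ 2)⁻¹ : ℝ) =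
      θ⁻¹ * Real.arctan (b / θ) - θ⁻¹ * Real.arctan (a / θ) := by
  refine intervalIntegral.integral_eq_sub_of_hasDerivAt
    (f := fun y => θ⁻¹ * Real.arctan (y / θ)) (fun x _ => ?_) ?_
  · have h1 : HasDerivAt (fun x : ℝ => x / θ) θ⁻¹ x := by
      simpa using (hasDerivAt_id x).div_const θ
    have h2 := ((Real.hasDerivAt_arctan (x / θ)).comp x h1).const_mul θ⁻¹
    convert h2 using 1
    · rfl
    · rfl
    field_simp
  · apply Continuous.intervalIntegrable
    exact (continuous_const.add (continuous_id.pow 2)).inv₀ (fun x => by simp only [Pi.add_apply, Pi.pow_apply, id]; positivity)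

/-- For `X ~ N(0,1)` and `g(x) = 1/√(θ² + x²)` with `θ > 0`,
`E[g(X)²] ≥ (1/θ)√(π/2) - 2/√π`. -/
theorem g_sq_moment_lower (θ : ℝ) (hθ : 0 < θ) :
    (∫ x, (1 / Real.sqrt (θ ^ 2 + x ^ 2)) ^ 2 ∂(gaussianReal 0 1))
      ≥ (1 / θ) * Real.sqrt (Real.pi / 2) - 2 / Real.sqrt Real.pi := by
  have hπ := Real.pi_pos
  have hsq : ∀ x : ℝ, (1 / Real.sqrt (θ ^ 2 + x ^ 2)) ^ 2 = (θ ^ 2 + x ^ 2)⁻¹ := by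
    intro x
    rw [div_pow, one_pow, Real.sq_sqrt (by positivity), one_div]
  simp_rw [hsq]
  rcases le_or_gt ((1 / θ) * Real.sqrt (Real.pi / 2)) (2 / Real.sqrt Real.pi) with h | h
  · have h0 : 0 ≤ ∫ x, (θ ^ 2 + x ^ 2)⁻¹ ∂(gaussianReal 0 1) :=
      integral_nonneg fun x => by positivity
    linarith
  -- convert gaussian integral to a Lebesgue integral
  have hcont : Continuous fun x : ℝ => (θ ^ 2 + x ^ 2)⁻¹ :=
    (continuous_const.add (continuous_id.pow 2)).inv₀ (fun x => by simp only [Pi.add_apply, Pi.pow_apply, id]; positivity)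
  have hrw : (∫ x, (θ ^ 2 + x ^ 2)⁻¹ ∂(gaussianReal 0 1))
      = ∫ x, gaussianPDFReal 0 1 x * (θ ^ 2 + x ^ 2)⁻¹ := by
    rw [gaussianReal_of_var_ne_zero _ one_ne_zero]
    have : gaussianPDF 0 1 = fun x => (((gaussianPDFReal 0 1 x).toNNReal : NNReal) : ENNReal) := by
      funext x; rfl
    rw [this, integral_withDensity_eq_integral_smul
      ((measurable_gaussianPDFReal 0 1).real_toNNReal) _]
    congr 1
    funext x
    simp [NNReal.smul_def, Real.coe_toNNReal _ (gaussianPDFReal_nonneg 0 1 x)]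
  rw [hrw]
  -- integrability
  have hintg : Integrable (fun x => gaussianPDFReal 0 1 x * (θ ^ 2 + x ^ 2)⁻¹) := by
    refine Integrable.mono' ((integrable_gaussianPDFReal 0 1).const_mul (θ ^ 2)⁻¹) ?_ ?_
    · exact ((measurable_gaussianPDFReal 0 1).mul hcont.measurable).aestronglyMeasurable
    · filter_upwards with x
      have h1 : (0:ℝ) ≤ gaussianPDFReal 0 1 x := gaussianPDFReal_nonneg 0 1 x
      have h2 : (θ ^ 2 + x ^ 2)⁻¹ ≤ (θ ^ 2)⁻¹ := by
        apply inv_anti₀ (by positivity); nlinarith [sq_nonneg x]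
      rw [Real.norm_eq_abs, abs_of_nonneg (by positivity)]
      calc gaussianPDFReal 0 1 x * (θ ^ 2 + x ^ 2)⁻¹
          ≤ gaussianPDFReal 0 1 x * (θ ^ 2)⁻¹ := by gcongr
        _ = (θ ^ 2)⁻¹ * gaussianPDFReal 0 1 x := by ring
  -- restrict to the interval [-√2, √2]
  have hnn : 0 ≤ᵐ[volume] fun x => gaussianPDFReal 0 1 x * (θ ^ 2 + x ^ 2)⁻¹ := by
    filter_upwards with x
    have := gaussianPDFReal_nonneg 0 1 x
    positivity
  have hset : (∫ x in Set.Ioc (-Real.sqrt 2) (Real.sqrt 2),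
        gaussianPDFReal 0 1 x * (θ ^ 2 + x ^ 2)⁻¹)
      ≤ ∫ x, gaussianPDFReal 0 1 x * (θ ^ 2 + x ^ 2)⁻¹ :=
    setIntegral_le_integral hintg hnn
  have hab : -Real.sqrt 2 ≤ Real.sqrt 2 := by
    have := Real.sqrt_nonneg 2; linarith
  have hIoc : (∫ x in Set.Ioc (-Real.sqrt 2) (Real.sqrt 2),
        gaussianPDFReal 0 1 x * (θ ^ 2 + x ^ 2)⁻¹)
      = ∫ x in (-Real.sqrt 2)..(Real.sqrt 2),
        gaussianPDFReal 0 1 x * (θ ^ 2 + x ^ 2)⁻¹ :=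
    (intervalIntegral.integral_of_le hab).symm
  -- pointwise lower bound on the interval
  have hgpdf : ∀ x : ℝ, gaussianPDFReal 0 1 x
      = (Real.sqrt (2 * Real.pi))⁻¹ * Real.exp (-(x ^ 2) / 2) := by
    intro x
    simp [gaussianPDFReal, one_div]
  have hptw : ∀ x : ℝ,
      (Real.sqrt (2 * Real.pi))⁻¹ * ((1 + θ ^ 2 / 2) * (θ ^ 2 + x ^ 2)⁻¹ - 1 / 2)
        ≤ gaussianPDFReal 0 1 x * (θ ^ 2 + x ^ 2)⁻¹ := by
    intro x
    rw [hgpdf x]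
    have hexp : 1 - x ^ 2 / 2 ≤ Real.exp (-(x ^ 2) / 2) := by
      have := Real.add_one_le_exp (-(x ^ 2) / 2)
      linarith
    have hd : (0:ℝ) < θ ^ 2 + x ^ 2 := by positivity
    have key : (1 + θ ^ 2 / 2) * (θ ^ 2 + x ^ 2)⁻¹ - 1 / 2
        = (1 - x ^ 2 / 2) * (θ ^ 2 + x ^ 2)⁻¹ := by
      field_simp
      ring
    rw [key, mul_assoc]
    exact mul_le_mul_of_nonneg_left
      (mul_le_mul_of_nonneg_right hexp (by positivity)) (by positivity)
  -- interval integral comparison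
  have hcontψ : Continuous fun x : ℝ =>
      (Real.sqrt (2 * Real.pi))⁻¹ * ((1 + θ ^ 2 / 2) * (θ ^ 2 + x ^ 2)⁻¹ - 1 / 2) := by
    fun_prop
  have hcontφ : Continuous fun x : ℝ => gaussianPDFReal 0 1 x * (θ ^ 2 + x ^ 2)⁻¹ := by
    simp only [funext hgpdf]
    fun_prop
  have hmono : (∫ x in (-Real.sqrt 2)..(Real.sqrt 2),
        (Real.sqrt (2 * Real.pi))⁻¹ * ((1 + θ ^ 2 / 2) * (θ ^ 2 + x ^ 2)⁻¹ - 1 / 2))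
      ≤ ∫ x in (-Real.sqrt 2)..(Real.sqrt 2),
        gaussianPDFReal 0 1 x * (θ ^ 2 + x ^ 2)⁻¹ := by
    apply intervalIntegral.integral_mono_on hab
      (hcontψ.intervalIntegrable _ _) (hcontφ.intervalIntegrable _ _)
    intro x _
    exact hptw x
  -- compute the lower interval integral
  have hs2 : (0:ℝ) < Real.sqrt 2 := Real.sqrt_pos.mpr two_pos
  have hcalc : (∫ x in (-Real.sqrt 2)..(Real.sqrt 2),
        (Real.sqrt (2 * Real.pi))⁻¹ * ((1 + θ ^ 2 / 2) * (θ ^ 2 + x ^ 2)⁻¹ - 1 / 2))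
      = (Real.sqrt (2 * Real.pi))⁻¹ *
        ((1 + θ ^ 2 / 2) * (2 * θ⁻¹ * Real.arctan (Real.sqrt 2 / θ)) - Real.sqrt 2) := by
    rw [intervalIntegral.integral_const_mul]
    congr 1
    rw [intervalIntegral.integral_sub (f := fun x : ℝ => (1 + θ ^ 2 / 2) * (θ ^ 2 + x ^ 2)⁻¹)
        (((continuous_const.mul hcont).intervalIntegrable _ _))
        intervalIntegrable_const,
      intervalIntegral.integral_const_mul, my_integral_inv_sq_add θ hθ,
      intervalIntegral.integral_const]
    rw [neg_div, Real.arctan_neg]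
    simp only [smul_eq_mul]
    ring
  -- lower bound on arctan
  have harct : Real.pi / 2 - θ / Real.sqrt 2 ≤ Real.arctan (Real.sqrt 2 / θ) := by
    have hpos : 0 < θ / Real.sqrt 2 := by positivity
    have h1 : Real.arctan ((θ / Real.sqrt 2)⁻¹) = Real.pi / 2 - Real.arctan (θ / Real.sqrt 2) :=
      Real.arctan_inv_of_pos hpos
    have h2 : (θ / Real.sqrt 2)⁻¹ = Real.sqrt 2 / θ := by
      rw [inv_div]
    rw [h2] at h1
    have h3 := my_arctan_le_self hpos.le
    linarith
  -- final arithmetic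
  set p := Real.sqrt Real.pi with hp
  set q := Real.sqrt 2 with hq
  have hp2 : p ^ 2 = Real.pi := Real.sq_sqrt hπ.le
  have hq2 : q ^ 2 = 2 := Real.sq_sqrt two_pos.le
  have hppos : 0 < p := Real.sqrt_pos.mpr hπ
  have hs : Real.sqrt (2 * Real.pi) = q * p := by
    rw [Real.sqrt_mul two_pos.le]
  have hpq : Real.sqrt (Real.pi / 2) = p / q := Real.sqrt_div hπ.le 2
  have hθ0 : θ ≠ 0 := hθ.ne'
  rw [hpq, show (1 / θ) * (p / q) = p / (θ * q) by rw [div_mul_div_comm, one_mul],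
    div_lt_div_iff₀ hppos (by positivity)] at h
  -- h : 2 * (θ * q) < p * p
  have hchain1 : (q * p)⁻¹ * ((1 + θ ^ 2 / 2) *
        (2 * θ⁻¹ * (Real.pi / 2 - θ / q)) - q)
      ≤ (q * p)⁻¹ * ((1 + θ ^ 2 / 2) *
        (2 * θ⁻¹ * Real.arctan (q / θ)) - q) := by
    gcongr
    all_goals first | positivity | exact harct
  have hfinal : p / (θ * q) - 2 / p
      ≤ (q * p)⁻¹ * ((1 + θ ^ 2 / 2) * (2 * θ⁻¹ * (Real.pi / 2 - θ / q)) - q) := by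
    rw [← sub_nonneg]
    have hexpand : (q * p)⁻¹ * ((1 + θ ^ 2 / 2) * (2 * θ⁻¹ * (Real.pi / 2 - θ / q)) - q)
        - (p / (θ * q) - 2 / p)
        = θ * (p ^ 2 * q - θ * q ^ 2) / (2 * q * q * p) := by
      rw [← hp2, ← hq2]
      field_simp
      linear_combination (q ^ 3 * θ) * hq2
    rw [hexpand]
    have hnum : 0 ≤ p ^ 2 * q - θ * q ^ 2 := by nlinarith [hs2, hppos]
    positivity
  rw [ge_iff_le, show (1 / θ) * Real.sqrt (Real.pi / 2) = p / (θ * q) by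
    rw [hpq, div_mul_div_comm, one_mul]]
  calc p / (θ * q) - 2 / p
      ≤ (q * p)⁻¹ * ((1 + θ ^ 2 / 2) * (2 * θ⁻¹ * Real.arctan (q / θ)) - q) :=
        hfinal.trans hchain1
    _ = ∫ x in (-q)..q, (Real.sqrt (2 * Real.pi))⁻¹ *
          ((1 + θ ^ 2 / 2) * (θ ^ 2 + x ^ 2)⁻¹ - 1 / 2) := by rw [hcalc, hs]
    _ ≤ ∫ x in (-q)..q, gaussianPDFReal 0 1 x * (θ ^ 2 + x ^ 2)⁻¹ := hmono
    _ = ∫ x in Set.Ioc (-q) q, gaussianPDFReal 0 1 x * (θ ^ 2 + x ^ 2)⁻¹ := hIoc.symm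
    _ ≤ ∫ x, gaussianPDFReal 0 1 x * (θ ^ 2 + x ^ 2)⁻¹ := hset
end
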